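/- (Faulhaber's theorem) For every m ≥ 1 there exists a polynomial F_m with rational coefficients such that for all natural numbers n, 1^{2m-1} + 2^{2m-1} + ... + n^{2m-1} = F_m(n(n+1)/2). -/

import Mathlib

open Finset Polynomial

/-- `f : ℕ → ℚ` is a polynomial function of the triangular numbers. -/
def inA (f : ℕ → ℚ) : Prop :=
  ∃ F : Polynomial ℚ, ∀ n : ℕ, f n = F.eval ((n * (n + 1) : ℚ) / 2)

lemma inA_zero : inA (fun _ => 0) := ⟨0, by simp⟩

lemma inA_smul (c : ℚ) {f : ℕ → ℚ} (hf : inA f) : inA (fun n => c * f n) := by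
  obtain ⟨F, hF⟩ := hf
  exact ⟨Polynomial.C c * F, fun n => by simp [hF n]⟩

lemma inA_add {f g : ℕ → ℚ} (hf : inA f) (hg : inA g) : inA (fun n => f n + g n) := by
  obtain ⟨F, hF⟩ := hf; obtain ⟨G, hG⟩ := hg
  exact ⟨F + G, fun n => by simp [hF n, hG n]⟩

lemma inA_sum {s : Finset ℕ} {f : ℕ → ℕ → ℚ} (h : ∀ k ∈ s, inA (f k)) :
    inA (fun n => ∑ k ∈ s, f k n) := by
  classical
  induction s using Finset.induction_on with
  | empty => simpa using inA_zero
  | @insert a s hk ih =>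
    simp only [Finset.sum_insert hk]
    exact inA_add (h a (Finset.mem_insert_self a s))
      (ih fun k hks => h k (Finset.mem_insert_of_mem hks))

lemma inA_pow (m : ℕ) : inA (fun n => ((n : ℚ) * (n + 1)) ^ m) := by
  refine ⟨(2 * X) ^ m, fun n => ?_⟩
  simp only [eval_pow, eval_mul, eval_ofNat, eval_X]
  congr 1
  ring

lemma diff_pow (m : ℕ) (x : ℚ) :
    (x ^ 2 + x) ^ m - (x ^ 2 - x) ^ m
      = ∑ k ∈ Finset.range (m + 1),
          (1 - (-1 : ℚ) ^ (m - k)) * (m.choose k) * x ^ (m + k) := by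
  rw [sub_eq_add_neg (x ^ 2) x, add_pow, add_pow, ← Finset.sum_sub_distrib]
  refine Finset.sum_congr rfl fun k hk => ?_
  rw [Finset.mem_range, Nat.lt_succ_iff] at hk
  have h1 : ((x ^ 2) ^ k : ℚ) * x ^ (m - k) = x ^ (m + k) := by
    rw [← pow_mul, ← pow_add]
    congr 1; omega
  have h2 : ((-x) ^ (m - k) : ℚ) = (-1) ^ (m - k) * x ^ (m - k) := by
    rw [neg_pow]
  rw [h2]
  linear_combination (1 - (-1 : ℚ) ^ (m - k)) * (m.choose k) * h1

lemma key_id (m : ℕ) (hm : 1 ≤ m) (n : ℕ) :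
    ((n : ℚ) * (n + 1)) ^ m
      = ∑ k ∈ Finset.range (m + 1),
          (1 - (-1 : ℚ) ^ (m - k)) * (m.choose k) *
            ∑ i ∈ Finset.Icc 1 n, (i : ℚ) ^ (m + k) := by
  induction n with
  | zero => simp [zero_pow (by omega : m ≠ 0)]
  | succ n ih =>
    have hsum : ∀ j : ℕ, ∑ i ∈ Finset.Icc 1 (n + 1), (i : ℚ) ^ j
        = (∑ i ∈ Finset.Icc 1 n, (i : ℚ) ^ j) + ((n : ℚ) + 1) ^ j := by
      intro j
      rw [Finset.sum_Icc_succ_top (by omega : 1 ≤ n + 1)]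
      push_cast
      ring
    simp only [hsum]
    have expand : ∑ k ∈ Finset.range (m + 1),
        (1 - (-1 : ℚ) ^ (m - k)) * (m.choose k) *
          ((∑ i ∈ Finset.Icc 1 n, (i : ℚ) ^ (m + k)) + ((n : ℚ) + 1) ^ (m + k))
      = (∑ k ∈ Finset.range (m + 1), (1 - (-1 : ℚ) ^ (m - k)) * (m.choose k) *
          ∑ i ∈ Finset.Icc 1 n, (i : ℚ) ^ (m + k))
        + ∑ k ∈ Finset.range (m + 1),
            (1 - (-1 : ℚ) ^ (m - k)) * (m.choose k) * ((n : ℚ) + 1) ^ (m + k) := by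
      rw [← Finset.sum_add_distrib]
      exact Finset.sum_congr rfl fun k _ => by ring
    rw [expand, ← ih, ← diff_pow m ((n : ℚ) + 1)]
    push_cast
    ring

lemma main_inA : ∀ m : ℕ, 1 ≤ m →
    inA (fun n => ∑ i ∈ Finset.Icc 1 n, (i : ℚ) ^ (2 * m - 1)) := by
  intro m
  induction m using Nat.strong_induction_on with
  | _ m IH =>
  intro hm
  obtain ⟨M, rfl⟩ : ∃ M, m = M + 1 := ⟨m - 1, by omega⟩
  have hkey : ∀ n : ℕ,
      ∑ i ∈ Finset.Icc 1 n, (i : ℚ) ^ (2 * (M + 1) - 1)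
        = (1 / (2 * ((M : ℚ) + 1))) * (((n : ℚ) * (n + 1)) ^ (M + 1)
            - ∑ k ∈ Finset.range M,
                (1 - (-1 : ℚ) ^ (M + 1 - k)) * ((M + 1).choose k) *
                  ∑ i ∈ Finset.Icc 1 n, (i : ℚ) ^ (M + 1 + k)) := by
    intro n
    have h := key_id (M + 1) (by omega) n
    rw [Finset.sum_range_succ, Finset.sum_range_succ] at h
    have c1 : (M + 1) - (M + 1) = 0 := by omega
    have c2 : (M + 1) - M = 1 := by omega
    rw [c1, c2] at h
    have hch : (((M + 1).choose M : ℚ)) = (M : ℚ) + 1 := by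
      rw [Nat.choose_succ_self_right]; push_cast; ring
    rw [hch] at h
    have hexp : 2 * (M + 1) - 1 = M + 1 + M := by omega
    rw [hexp]
    have h2 : (2 * ((M : ℚ) + 1)) ≠ 0 := by positivity
    field_simp
    norm_num at h
    linarith [h]
  have h1 := inA_pow (M + 1)
  have h2 : inA (fun n => ∑ k ∈ Finset.range M,
      (1 - (-1 : ℚ) ^ (M + 1 - k)) * ((M + 1).choose k) *
        ∑ i ∈ Finset.Icc 1 n, (i : ℚ) ^ (M + 1 + k)) := by
    apply inA_sum
    intro k hk
    rw [Finset.mem_range] at hk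
    rcases Nat.even_or_odd (M + 1 - k) with he | ho
    · have hone : (-1 : ℚ) ^ (M + 1 - k) = 1 := he.neg_one_pow
      simpa [hone] using inA_zero
    · obtain ⟨j0, hj0⟩ := ho
      have hodd : ∃ j, M + 1 + k = 2 * j + 1 := ⟨j0 + k, by omega⟩
      obtain ⟨j, hj⟩ := hodd
      have hj1 : M + 1 + k = 2 * (j + 1) - 1 := by omega
      simp only [hj1]
      exact inA_smul _ (IH (j + 1) (by omega) (by omega))
  obtain ⟨F1, hF1⟩ := h1
  obtain ⟨F2, hF2⟩ := h2
  refine ⟨Polynomial.C (1 / (2 * ((M : ℚ) + 1))) * (F1 - F2), fun n => ?_⟩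
  show ∑ i ∈ Finset.Icc 1 n, (i : ℚ) ^ (2 * (M + 1) - 1) = _
  rw [hkey n, eval_mul, eval_sub, eval_C, ← hF1 n, ← hF2 n]

theorem faulhaber (m : ℕ) (hm : 1 ≤ m) :
    ∃ F : Polynomial ℚ, ∀ n : ℕ,
      ∑ i ∈ Finset.Icc 1 n, (i : ℚ) ^ (2 * m - 1) = F.eval ((n * (n + 1) : ℚ) / 2) := by
  exact main_inA m hm
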